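/- If G is a graph of order n and x is any vertex of G, then the equitable chromatic number of G satisfies χ_=(G) ≥ ⌈(n+1)/(α_x(G)+1)⌉. -/
import Mathlib


open SimpleGraph Finset

variable {V : Type*}

/-- A stable (independent) set of vertices. -/
def IsStable (G : SimpleGraph V) (S : Finset V) : Prop :=
  ∀ x ∈ S, ∀ y ∈ S, ¬G.Adj x y

/-- Stability (independence) number. -/
noncomputable def stabNum (G : SimpleGraph V) [Fintype V] : ℕ :=
  sSup {n | ∃ S : Finset V, IsStable G S ∧ S.card = n}

/-- `x`-stability number: max size of a stable set containing `x`. -/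
noncomputable def stabNumAt (G : SimpleGraph V) [Fintype V] (x : V) : ℕ :=
  sSup {n | ∃ S : Finset V, IsStable G S ∧ x ∈ S ∧ S.card = n}

/-- Stability number of the subgraph induced on a vertex set `s`. -/
noncomputable def stabNumOn (G : SimpleGraph V) (s : Set V) : ℕ :=
  sSup {n | ∃ S : Finset V, ↑S ⊆ s ∧ IsStable G S ∧ S.card = n}

/-- `G` admits an equitable `k`-coloring. -/
def EquitablyColorable (G : SimpleGraph V) [Fintype V] (k : ℕ) : Prop :=
  ∃ c : V → Fin k, (∀ a b, G.Adj a b → c a ≠ c b) ∧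
    ∀ i j : Fin k,
      (Finset.univ.filter fun v => c v = i).card ≤
        (Finset.univ.filter fun v => c v = j).card + 1

/-- Equitable chromatic number. -/
noncomputable def eqChromNum (G : SimpleGraph V) [Fintype V] : ℕ :=
  sInf {k | EquitablyColorable G k}

lemma card_le_stabNumAt [Fintype V] (G : SimpleGraph V) (x : V) (S : Finset V)
    (hS : IsStable G S) (hx : x ∈ S) : S.card ≤ stabNumAt G x := by
  apply le_csSup
  · refine ⟨Fintype.card V, ?_⟩
    rintro n ⟨T, -, -, rfl⟩
    exact T.card_le_univ
  · exact ⟨S, hS, hx, rfl⟩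

lemma key [Fintype V] (G : SimpleGraph V) (x : V) {k : ℕ}
    (h : EquitablyColorable G k) :
    Fintype.card V + 1 ≤ k * (stabNumAt G x + 1) := by
  classical
  obtain ⟨c, hc, hbal⟩ := h
  set a := stabNumAt G x with ha
  have hkpos : 0 < k := Fin.pos (c x)
  obtain ⟨k', rfl⟩ : ∃ k', k = k' + 1 := ⟨k - 1, (Nat.succ_pred_eq_of_pos hkpos).symm⟩
  have hstab : IsStable G (Finset.univ.filter fun v => c v = c x) := by
    intro u hu v hv hadj
    simp only [Finset.mem_filter] at hu hv
    exact hc u v hadj (hu.2.trans hv.2.symm)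
  have hxmem : x ∈ Finset.univ.filter fun v => c v = c x := by simp
  have hclass : (Finset.univ.filter fun v => c v = c x).card ≤ a :=
    card_le_stabNumAt G x _ hstab hxmem
  have hsum : Fintype.card V = ∑ i : Fin (k' + 1), (Finset.univ.filter fun v => c v = i).card := by
    rw [← Finset.card_univ]
    exact Finset.card_eq_sum_card_fiberwise (fun v _ => Finset.mem_univ (c v))
  have hsum' : ∑ i : Fin (k' + 1), (Finset.univ.filter fun v => c v = i).card
      = ∑ i ∈ Finset.univ.erase (c x), (Finset.univ.filter fun v => c v = i).card
        + (Finset.univ.filter fun v => c v = c x).card :=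
    (Finset.sum_erase_add _ _ (Finset.mem_univ (c x))).symm
  have hrest : ∑ i ∈ Finset.univ.erase (c x), (Finset.univ.filter fun v => c v = i).card
      ≤ k' * (a + 1) := by
    calc ∑ i ∈ Finset.univ.erase (c x), (Finset.univ.filter fun v => c v = i).card
        ≤ (Finset.univ.erase (c x)).card * (a + 1) := by
          apply Finset.sum_le_card_nsmul
          intro i _
          calc (Finset.univ.filter fun v => c v = i).card
              ≤ (Finset.univ.filter fun v => c v = c x).card + 1 := hbal i (c x)
            _ ≤ a + 1 := by omega
      _ = k' * (a + 1) := by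
          rw [Finset.card_erase_of_mem (Finset.mem_univ _), Finset.card_univ, Fintype.card_fin]
          congr 1
  have hexp : (k' + 1) * (a + 1) = k' * (a + 1) + a + 1 := by ring
  omega

lemma key2 [Fintype V] (G : SimpleGraph V) (x : V) :
    Fintype.card V + 1 ≤ (eqChromNum G) * (stabNumAt G x + 1) := by
  classical
  have hne : {k | EquitablyColorable G k}.Nonempty := by
    refine ⟨Fintype.card V, (Fintype.equivFin V : V → Fin _), ?_, ?_⟩
    · intro a b hab h
      exact (G.ne_of_adj hab) ((Fintype.equivFin V).injective h)
    · intro i j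
      have h1 : (Finset.univ.filter fun v => Fintype.equivFin V v = i).card ≤ 1 := by
        apply Finset.card_le_one.mpr
        intro a ha b hb
        simp only [Finset.mem_filter] at ha hb
        exact (Fintype.equivFin V).injective (ha.2.trans hb.2.symm)
      omega
  exact key G x (Nat.sInf_mem hne)

theorem stmt0 [Fintype V] (G : SimpleGraph V) (x : V) :
    (eqChromNum G : ℤ) ≥
      ⌈((Fintype.card V : ℚ) + 1) / ((stabNumAt G x : ℚ) + 1)⌉ := by
  have h := key2 G x
  rw [ge_iff_le, Int.ceil_le]
  rw [div_le_iff₀ (by positivity)]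
  push_cast
  exact_mod_cast (by exact_mod_cast h : ((Fintype.card V : ℚ) + 1) ≤ (eqChromNum G) * ((stabNumAt G x : ℚ) + 1))
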